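/- Uniqueness test completeness: let G = (V,E) have weights w and suppose S and Ŝ are two distinct minimum cut-sets (both containing s). Define w₁ on G' = (V, E ∪ E_star^s) as the indicator of star edges (s,v) with v ∉ S. If S also minimizes [w, w₁](cut(·)) over nonempty proper subsets, then V∖S ⊊ V∖Ŝ; consequently, for any t ∉ S and w₂ on Ḡ = (V, E ∪ E_star^t) defined as the indicator of star edges (t,v) with v ∈ S, S does NOT minimize [w, w₂](cut(·)): indeed w₂(cut(S)) = |S| > |Ŝ| = w₂(cut(Ŝ)) and w(cut(S)) = w(cut(Ŝ)). -/

import Mathlib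

open Finset
open scoped Classical

/-- The weight of the cut induced by `S`. -/
noncomputable def cutWeight {V : Type*} (E : Finset (Sym2 V)) (w : Sym2 V → ℕ)
    (S : Finset V) : ℕ :=
  ∑ e ∈ E.filter (fun e => (∃ u ∈ e, u ∈ S) ∧ ∃ u ∈ e, u ∉ S), w e

/-- Indicator weight of edges incident to `s` (the star at `s`). -/
noncomputable def starWeight {V : Type*} (s : V) : Sym2 V → ℕ :=
  fun e => if s ∈ e then 1 else 0

section Aux
set_option linter.unusedSectionVars false

variable {V : Type*} [Fintype V] [DecidableEq V]

lemma cutWeight_stitch (G : Finset (Sym2 V)) (f g : Sym2 V → ℕ) (c : ℕ) (T : Finset V) :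
    cutWeight G (fun e => c * f e + g e) T = c * cutWeight G f T + cutWeight G g T := by
  simp [cutWeight, Finset.sum_add_distrib, Finset.mul_sum]

lemma cutWeight_union_ext (E X : Finset (Sym2 V)) (w : Sym2 V → ℕ) (T : Finset V) :
    cutWeight (E ∪ X) (fun e => if e ∈ E then w e else 0) T = cutWeight E w T := by
  unfold cutWeight
  rw [Finset.sum_filter, Finset.sum_filter]
  refine (Finset.sum_subset Finset.subset_union_left fun e _ hne => ?_).symm.trans
    (Finset.sum_congr rfl fun e he => ?_)
  · simp [hne]
  · simp [he]

lemma cutWeight_congr (G : Finset (Sym2 V)) (f g : Sym2 V → ℕ) (T : Finset V)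
    (h : ∀ e, f e = g e) : cutWeight G f T = cutWeight G g T := by
  unfold cutWeight
  exact Finset.sum_congr rfl fun e _ => h e

lemma cutWeight_star_ind (G : Finset (Sym2 V)) (t : V) (A T : Finset V)
    (ht : ∀ v ∈ A, v ≠ t) (hG : ∀ v ∈ A, s(t, v) ∈ G) :
    cutWeight G (fun e => if ∃ v : V, v ∈ A ∧ e = s(t, v) then 1 else 0) T
      = (A.filter (fun v => (t ∈ T ∧ v ∉ T) ∨ (t ∉ T ∧ v ∈ T))).card := by
  unfold cutWeight
  rw [Finset.sum_boole, Nat.cast_id]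
  have inj : Set.InjOn (fun v => s(t, v))
      ↑(A.filter (fun v => (t ∈ T ∧ v ∉ T) ∨ (t ∉ T ∧ v ∈ T))) := by
    intro a ha b hb hab
    simp only [Finset.coe_filter, Set.mem_setOf_eq] at ha hb
    rcases Sym2.eq_iff.mp hab with ⟨_, h⟩ | ⟨h1, h2⟩
    · exact h
    · exact h2.trans h1
  rw [← Finset.card_image_of_injOn inj]
  refine congrArg Finset.card (Finset.ext fun e => ?_)
  simp only [Finset.mem_filter, Finset.mem_image]
  constructor
  · rintro ⟨⟨heG, hc1, hc2⟩, v, hvA, rfl⟩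
    refine ⟨v, ⟨hvA, ?_⟩, rfl⟩
    simp only [Sym2.mem_iff] at hc1 hc2
    obtain ⟨u, hu, huT⟩ := hc1
    obtain ⟨u', hu', huT'⟩ := hc2
    rcases hu with rfl | rfl <;> rcases hu' with rfl | rfl <;> tauto
  · rintro ⟨v, ⟨hvA, hcond⟩, rfl⟩
    refine ⟨⟨hG v hvA, ?_, ?_⟩, v, hvA, rfl⟩
    · rcases hcond with ⟨h1, _⟩ | ⟨_, h2⟩
      · exact ⟨t, by simp, h1⟩
      · exact ⟨v, by simp, h2⟩
    · rcases hcond with ⟨_, h2⟩ | ⟨h1, _⟩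
      · exact ⟨v, by simp, h2⟩
      · exact ⟨t, by simp, h1⟩

end Aux

/-- Uniqueness test completeness: if S and Ŝ are two distinct minimum cut-sets of G
(both containing s) and S survives the first test (it minimizes the stitched weight
[w, w₁] on G' = (V, E ∪ E_star^s)), then V ∖ S ⊊ V ∖ Ŝ; consequently, for every
t ∉ S, S fails the second test on Ḡ = (V, E ∪ E_star^t) with w₂ the indicator of
star edges (t, v) with v ∈ S: indeed w₂(cut(S)) = |S| > |Ŝ| = w₂(cut(Ŝ)) while
w(cut(S)) = w(cut(Ŝ)), so S does not minimize [w, w₂]. -/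
theorem uniqueness_test_completeness {V : Type*} [Fintype V] [DecidableEq V]
    (E : Finset (Sym2 V)) (w : Sym2 V → ℕ) (s : V)
    (S Shat : Finset V) (hs : s ∈ S) (hshat : s ∈ Shat) (hSne : S ≠ Shat)
    (hne : S.Nonempty) (hpr : S ≠ Finset.univ)
    (hne' : Shat.Nonempty) (hpr' : Shat ≠ Finset.univ)
    (hmin : ∀ T : Finset V, T.Nonempty → T ≠ Finset.univ →
      cutWeight E w S ≤ cutWeight E w T)
    (hmin' : ∀ T : Finset V, T.Nonempty → T ≠ Finset.univ →
      cutWeight E w Shat ≤ cutWeight E w T)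
    (hstmin : ∀ T : Finset V, T.Nonempty → T ≠ Finset.univ →
      cutWeight
          (E ∪ (Finset.univ.filter (fun v => v ≠ s)).image (fun v => s(s, v)))
          (fun e => (Fintype.card V + 1) * (if e ∈ E then w e else 0) +
            (if ∃ v : V, v ∉ S ∧ e = s(s, v) then 1 else 0)) S ≤
        cutWeight
          (E ∪ (Finset.univ.filter (fun v => v ≠ s)).image (fun v => s(s, v)))
          (fun e => (Fintype.card V + 1) * (if e ∈ E then w e else 0) +
            (if ∃ v : V, v ∉ S ∧ e = s(s, v) then 1 else 0)) T) :
    (Finset.univ \ S ⊂ Finset.univ \ Shat) ∧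
      ∀ t : V, t ∉ S →
        let Gbar : Finset (Sym2 V) :=
          E ∪ (Finset.univ.filter (fun v => v ≠ t)).image (fun v => s(t, v))
        let wext : Sym2 V → ℕ := fun e => if e ∈ E then w e else 0
        let w₂ : Sym2 V → ℕ :=
          fun e => if ∃ v : V, v ∈ S ∧ e = s(t, v) then 1 else 0
        cutWeight Gbar w₂ S = S.card ∧
          cutWeight Gbar w₂ Shat = Shat.card ∧
          Shat.card < S.card ∧
          cutWeight Gbar wext S = cutWeight Gbar wext Shat ∧
          ¬ (∀ T : Finset V, T.Nonempty → T ≠ Finset.univ →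
            cutWeight Gbar (fun e => (Fintype.card V + 1) * wext e + w₂ e) S ≤
              cutWeight Gbar (fun e => (Fintype.card V + 1) * wext e + w₂ e) T) := by
  have hCeq : cutWeight E w S = cutWeight E w Shat :=
    le_antisymm (hmin Shat hne' hpr') (hmin' S hne hpr)
  set X := (Finset.univ.filter (fun v => v ≠ s)).image (fun v => s(s, v)) with hXdef
  have hmemX : ∀ v ∈ Finset.univ \ S, s(s, v) ∈ E ∪ X := by
    intro v hv
    refine Finset.mem_union_right _ (Finset.mem_image.mpr ⟨v, ?_, rfl⟩)
    simp only [Finset.mem_filter, Finset.mem_univ, true_and]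
    intro h; exact (Finset.mem_sdiff.mp hv).2 (h ▸ hs)
  have hts : ∀ v ∈ Finset.univ \ S, v ≠ s := by
    intro v hv h
    exact (Finset.mem_sdiff.mp hv).2 (h ▸ hs)
  have hsplit : ∀ T : Finset V,
      cutWeight (E ∪ X)
        (fun e => (Fintype.card V + 1) * (if e ∈ E then w e else 0) +
          (if ∃ v : V, v ∉ S ∧ e = s(s, v) then 1 else 0)) T
      = (Fintype.card V + 1) * cutWeight E w T +
        ((Finset.univ \ S).filter
          (fun v => (s ∈ T ∧ v ∉ T) ∨ (s ∉ T ∧ v ∈ T))).card := by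
    intro T
    rw [cutWeight_stitch, cutWeight_union_ext]
    refine congrArg (HAdd.hAdd _) ((cutWeight_congr _ _ _ _ fun e => ?_).trans
      (cutWeight_star_ind (E ∪ X) s (Finset.univ \ S) T hts hmemX))
    simp [Finset.mem_sdiff]
  have h1 := hstmin Shat hne' hpr'
  rw [hsplit S, hsplit Shat, hCeq] at h1
  have hfS : ((Finset.univ \ S).filter
      (fun v => (s ∈ S ∧ v ∉ S) ∨ (s ∉ S ∧ v ∈ S))) = Finset.univ \ S :=
    Finset.filter_true_of_mem fun v hv => Or.inl ⟨hs, (Finset.mem_sdiff.mp hv).2⟩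
  rw [hfS] at h1
  have hcard : (Finset.univ \ S).card ≤ ((Finset.univ \ S).filter
      (fun v => (s ∈ Shat ∧ v ∉ Shat) ∨ (s ∉ Shat ∧ v ∈ Shat))).card :=
    (add_le_add_iff_left _).mp h1
  have heq := Finset.eq_of_subset_of_card_le (Finset.filter_subset _ _) hcard
  have hsub : Finset.univ \ S ⊆ Finset.univ \ Shat := by
    intro v hv
    have hv' := heq ▸ hv
    rcases (Finset.mem_filter.mp hv').2 with ⟨_, h⟩ | ⟨hns, _⟩
    · exact Finset.mem_sdiff.mpr ⟨Finset.mem_univ v, h⟩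
    · exact absurd hshat hns
  have hShatS : Shat ⊆ S := by
    intro v hv
    by_contra hns
    exact (Finset.mem_sdiff.mp
      (hsub (Finset.mem_sdiff.mpr ⟨Finset.mem_univ v, hns⟩))).2 hv
  have hShatSs : Shat ⊂ S := lt_of_le_of_ne hShatS (Ne.symm hSne)
  have hclt : Shat.card < S.card := Finset.card_lt_card hShatSs
  constructor
  · refine lt_of_le_of_ne hsub fun h => hSne ?_
    ext v
    have hv := Finset.ext_iff.mp h v
    simp only [Finset.mem_sdiff, Finset.mem_univ, true_and] at hv
    constructor
    · intro h1
      by_contra h2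
      exact hv.mpr h2 h1
    · intro h1
      by_contra h2
      exact hv.mp h2 h1
  · intro t ht
    dsimp only
    have htShat : t ∉ Shat := fun h => ht (hShatS h)
    set Y := (Finset.univ.filter (fun v => v ≠ t)).image (fun v => s(t, v)) with hYdef
    have hmemY : ∀ v ∈ S, s(t, v) ∈ E ∪ Y := by
      intro v hv
      refine Finset.mem_union_right _ (Finset.mem_image.mpr ⟨v, ?_, rfl⟩)
      simp only [Finset.mem_filter, Finset.mem_univ, true_and]
      intro h; exact ht (h ▸ hv)
    have htv : ∀ v ∈ S, v ≠ t := fun v hv h => ht (h ▸ hv)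
    have hc1 : cutWeight (E ∪ Y)
        (fun e => if ∃ v : V, v ∈ S ∧ e = s(t, v) then 1 else 0) S = S.card := by
      rw [cutWeight_star_ind (E ∪ Y) t S S htv hmemY]
      congr 1
      exact Finset.filter_true_of_mem fun v hv => Or.inr ⟨ht, hv⟩
    have hc2 : cutWeight (E ∪ Y)
        (fun e => if ∃ v : V, v ∈ S ∧ e = s(t, v) then 1 else 0) Shat
        = Shat.card := by
      rw [cutWeight_star_ind (E ∪ Y) t S Shat htv hmemY]
      congr 1
      ext v
      simp only [Finset.mem_filter]
      constructor
      · rintro ⟨hvS, ⟨h1, _⟩ | ⟨_, h2⟩⟩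
        · exact absurd h1 htShat
        · exact h2
      · intro hv
        exact ⟨hShatS hv, Or.inr ⟨htShat, hv⟩⟩
    have hwextS : cutWeight (E ∪ Y) (fun e => if e ∈ E then w e else 0) S
        = cutWeight (E ∪ Y) (fun e => if e ∈ E then w e else 0) Shat := by
      rw [cutWeight_union_ext, cutWeight_union_ext, hCeq]
    refine ⟨hc1, hc2, hclt, hwextS, fun hall => ?_⟩
    have h2 := hall Shat hne' hpr'
    rw [cutWeight_stitch, cutWeight_stitch, cutWeight_union_ext, cutWeight_union_ext,
      hCeq, hc1, hc2] at h2
    have := (add_le_add_iff_left _).mp h2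
    omega
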